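/- Let N be a multiplicative seminorm on A_r bounded by ‖·‖_{hyb,r} whose restriction to the constant series is the trivial norm (N(c) = 1 for every c ∈ ℂ ∖ {0}). Then N(f) = r^{ord_0(f)} for every nonzero f ∈ A_r; that is, N = τ(0). -/

import Mathlib

/-- The hybrid norm on `ℂ`: `|c|_hyb = max {1, |c|}` for `c ≠ 0`, and `|0|_hyb = 0`. -/
noncomputable def hybNorm (c : ℂ) : ℝ := if c = 0 then 0 else max 1 (‖c‖)

/-- The ring `A_r` of formal Laurent series `f = ∑ aₙ tⁿ` with
`∑ |aₙ|_hyb rⁿ < ∞`, viewed as a subset of `ℂ((t))`. -/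
def Ar (r : ℝ) : Set (LaurentSeries ℂ) :=
  {f | Summable fun n : ℤ => hybNorm (f.coeff n) * r ^ n}

/-- The hybrid norm `‖f‖_{hyb,r} = ∑ |aₙ|_hyb rⁿ` of a Laurent series. -/
noncomputable def hybnorm (r : ℝ) (f : LaurentSeries ℂ) : ℝ :=
  ∑' n : ℤ, hybNorm (f.coeff n) * r ^ n

open scoped Classical

/-- The sum of the Laurent series of `f` at a point `z ∈ ℂ`. -/
noncomputable def lEval (f : LaurentSeries ℂ) (z : ℂ) : ℂ :=
  ∑' n : ℤ, f.coeff n * z ^ n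

/-- The seminorm `τ(z)` on `A_r`: for `z = 0` it is `f ↦ r^{ord₀ f}` (with `0 ↦ 0`),
and for `0 < |z| ≤ r` it is `f ↦ |f(z)|^{log r / log |z|}`. -/
noncomputable def tau (r : ℝ) (z : ℂ) (f : LaurentSeries ℂ) : ℝ :=
  if z = 0 then (if f = 0 then 0 else r ^ f.order)
  else ‖lEval f z‖ ^ (Real.log r / Real.log (‖z‖))

/-- `N` is a multiplicative seminorm on the subset `S` of `ℂ((t))` (relativized to `S`):
`N 0 = 0`, `N 1 = 1`, `N` is nonnegative, multiplicative and subadditive on `S`. -/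
def IsMultSeminormOn (S : Set (LaurentSeries ℂ)) (N : LaurentSeries ℂ → ℝ) : Prop :=
  N 0 = 0 ∧ N 1 = 1 ∧ (∀ f ∈ S, 0 ≤ N f) ∧
    (∀ f ∈ S, ∀ g ∈ S, N (f * g) = N f * N g) ∧
    (∀ f ∈ S, ∀ g ∈ S, N (f + g) ≤ N f + N g)

/-! ### Auxiliary lemmas on `hybNorm` -/

lemma hybNorm_nonneg (c : ℂ) : 0 ≤ hybNorm c := by
  unfold hybNorm
  split
  · exact le_refl 0
  · exact le_trans zero_le_one (le_max_left _ _)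

lemma one_le_hybNorm {c : ℂ} (h : c ≠ 0) : 1 ≤ hybNorm c := by
  unfold hybNorm
  rw [if_neg h]
  exact le_max_left _ _

lemma abs_le_hybNorm (c : ℂ) : ‖c‖ ≤ hybNorm c := by
  unfold hybNorm
  split
  · next h => simp [h]
  · exact le_max_right _ _

lemma hybNorm_zero : hybNorm 0 = 0 := by simp [hybNorm]

lemma hybNorm_mul_le (a b : ℂ) : hybNorm (a * b) ≤ hybNorm a * hybNorm b := by
  rcases eq_or_ne a 0 with rfl | ha
  · simp [hybNorm]
  rcases eq_or_ne b 0 with rfl | hb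
  · simp [hybNorm]
  unfold hybNorm
  rw [if_neg ha, if_neg hb, if_neg (mul_ne_zero ha hb), norm_mul]
  have h1a : (0:ℝ) ≤ max 1 (‖a‖) := le_trans zero_le_one (le_max_left _ _)
  have h1b : (0:ℝ) ≤ max 1 (‖b‖) := le_trans zero_le_one (le_max_left _ _)
  apply max_le
  · calc (1:ℝ) = 1 * 1 := (one_mul 1).symm
      _ ≤ max 1 (‖a‖) * max 1 (‖b‖) :=
        mul_le_mul (le_max_left _ _) (le_max_left _ _) zero_le_one h1a
  · exact mul_le_mul (le_max_right _ _) (le_max_right _ _) (norm_nonneg _) h1a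

lemma hybNorm_add_le (a b : ℂ) : hybNorm (a + b) ≤ hybNorm a + hybNorm b := by
  rcases eq_or_ne a 0 with rfl | ha
  · simp [hybNorm_zero, hybNorm_nonneg]
  rcases eq_or_ne b 0 with rfl | hb
  · simp [hybNorm_zero, hybNorm_nonneg]
  rcases eq_or_ne (a + b) 0 with h0 | h0
  · rw [h0, hybNorm_zero]
    exact add_nonneg (hybNorm_nonneg a) (hybNorm_nonneg b)
  unfold hybNorm
  rw [if_neg ha, if_neg hb, if_neg h0]
  apply max_le
  · calc (1:ℝ) ≤ max 1 (‖a‖) := le_max_left _ _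
      _ ≤ _ := le_add_of_nonneg_right (le_trans zero_le_one (le_max_left _ _))
  · calc ‖a + b‖ ≤ ‖a‖ + ‖b‖ := norm_add_le a b
      _ ≤ max 1 (‖a‖) + max 1 (‖b‖) :=
        add_le_add (le_max_right _ _) (le_max_right _ _)

lemma hybNorm_neg (a : ℂ) : hybNorm (-a) = hybNorm a := by
  simp [hybNorm, neg_eq_zero]

lemma hybNorm_sum_le {ι : Type*} (s : Finset ι) (f : ι → ℂ) :
    hybNorm (∑ i ∈ s, f i) ≤ ∑ i ∈ s, hybNorm (f i) := by
  classical
  induction s using Finset.induction_on with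
  | empty => simp [hybNorm_zero]
  | insert _ _ h ih =>
    rw [Finset.sum_insert h, Finset.sum_insert h]
    exact le_trans (hybNorm_add_le _ _) (by linarith)

/-! ### Membership lemmas for `Ar` -/

section ArMem

variable {r : ℝ}

lemma Ar_term_nonneg (hr0 : 0 < r) (f : LaurentSeries ℂ) (n : ℤ) :
    0 ≤ hybNorm (f.coeff n) * r ^ n :=
  mul_nonneg (hybNorm_nonneg _) (zpow_pos hr0 n).le

lemma Ar_single (r : ℝ) (d : ℤ) (c : ℂ) : HahnSeries.single d c ∈ Ar r := by
  apply summable_of_ne_finset_zero (s := {d})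
  intro n hn
  rw [HahnSeries.coeff_single, if_neg (by simpa using hn), hybNorm_zero, zero_mul]

lemma Ar_one (r : ℝ) : (1 : LaurentSeries ℂ) ∈ Ar r := by
  rw [← HahnSeries.single_zero_one]
  exact Ar_single r 0 1

lemma Ar_C (r : ℝ) (c : ℂ) : (HahnSeries.C c : LaurentSeries ℂ) ∈ Ar r := by
  rw [HahnSeries.C_apply]
  exact Ar_single r 0 c

set_option maxHeartbeats 1000000 in
lemma Ar_mul (hr0 : 0 < r) {f g : LaurentSeries ℂ} (hf : f ∈ Ar r) (hg : g ∈ Ar r) :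
    f * g ∈ Ar r := by
  classical
  show Summable fun n : ℤ => hybNorm ((f * g).coeff n) * r ^ n
  set F : ℤ × ℤ → ℝ := fun p =>
    (hybNorm (f.coeff p.1) * r ^ p.1) * (hybNorm (g.coeff p.2) * r ^ p.2) with hFdef
  have hFnn : ∀ p, 0 ≤ F p := fun p =>
    mul_nonneg (Ar_term_nonneg hr0 f p.1) (Ar_term_nonneg hr0 g p.2)
  have hFs : Summable F :=
    Summable.mul_of_nonneg hf hg (fun n => Ar_term_nonneg hr0 f n) (fun n => Ar_term_nonneg hr0 g n)
  apply summable_of_sum_le (c := ∑' p, F p) (fun n => Ar_term_nonneg hr0 (f * g) n)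
  intro u
  have key : ∀ n ∈ u, hybNorm ((f * g).coeff n) * r ^ n ≤
      ∑ p ∈ Finset.addAntidiagonal f.isPWO_support g.isPWO_support n, F p := by
    intro n _
    rw [HahnSeries.coeff_mul]
    refine le_trans (mul_le_mul_of_nonneg_right (hybNorm_sum_le _ _) (zpow_pos hr0 n).le) ?_
    rw [Finset.sum_mul]
    apply Finset.sum_le_sum
    intro p hp
    have hpn : p.1 + p.2 = n := (Finset.mem_addAntidiagonal.mp hp).2.2
    have h1 : hybNorm (f.coeff p.1 * g.coeff p.2) * r ^ n ≤
        (hybNorm (f.coeff p.1) * hybNorm (g.coeff p.2)) * r ^ n :=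
      mul_le_mul_of_nonneg_right (hybNorm_mul_le _ _) (zpow_pos hr0 n).le
    refine le_trans h1 (le_of_eq ?_)
    rw [hFdef]
    dsimp only
    rw [← hpn, zpow_add₀ hr0.ne']
    ring
  calc ∑ n ∈ u, hybNorm ((f * g).coeff n) * r ^ n
      ≤ ∑ n ∈ u, ∑ p ∈ Finset.addAntidiagonal f.isPWO_support g.isPWO_support n, F p :=
        Finset.sum_le_sum key
    _ = ∑ p ∈ u.biUnion (fun n => Finset.addAntidiagonal f.isPWO_support g.isPWO_support n),
          F p := by
        rw [Finset.sum_biUnion]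
        intro x _ y _ hxy
        simp only [Finset.disjoint_left]
        intro p hpx hpy
        have h1 : p.1 + p.2 = x := (Finset.mem_addAntidiagonal.mp hpx).2.2
        have h2 : p.1 + p.2 = y := (Finset.mem_addAntidiagonal.mp hpy).2.2
        exact hxy (h1 ▸ h2)
    _ ≤ ∑' p, F p := Summable.sum_le_tsum _ (fun p _ => hFnn p) hFs

lemma Ar_pow (hr0 : 0 < r) {f : LaurentSeries ℂ} (hf : f ∈ Ar r) (k : ℕ) : f ^ k ∈ Ar r := by
  induction k with
  | zero => simpa using Ar_one r
  | succ m ih => rw [pow_succ]; exact Ar_mul hr0 ih hf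

lemma Ar_neg {f : LaurentSeries ℂ} (hf : f ∈ Ar r) : -f ∈ Ar r := by
  have h : (fun n : ℤ => hybNorm ((-f).coeff n) * r ^ n) =
      fun n : ℤ => hybNorm (f.coeff n) * r ^ n := by
    funext n
    rw [HahnSeries.coeff_neg, hybNorm_neg]
  show Summable _
  rw [h]
  exact hf

lemma Ar_add (hr0 : 0 < r) {f g : LaurentSeries ℂ} (hf : f ∈ Ar r) (hg : g ∈ Ar r) :
    f + g ∈ Ar r := by
  have hfs : Summable (fun n : ℤ => hybNorm (f.coeff n) * r ^ n) := hf
  have hgs : Summable (fun n : ℤ => hybNorm (g.coeff n) * r ^ n) := hg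
  refine Summable.of_nonneg_of_le (fun n => Ar_term_nonneg hr0 (f + g) n) ?_ (hfs.add hgs)
  intro n
  rw [HahnSeries.coeff_add, ← add_mul]
  exact mul_le_mul_of_nonneg_right (hybNorm_add_le _ _) (zpow_pos hr0 n).le

lemma Ar_sub (hr0 : 0 < r) {f g : LaurentSeries ℂ} (hf : f ∈ Ar r) (hg : g ∈ Ar r) :
    f - g ∈ Ar r := by
  rw [sub_eq_add_neg]
  exact Ar_add hr0 hf (Ar_neg hg)

end ArMem

/-! ### A geometric series over `ℤ` -/

lemma geom_shift (r : ℝ) (hr0 : 0 < r) (hr1 : r < 1) (d : ℤ) :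
    Summable (fun n : ℤ => if d ≤ n then r ^ n else 0) ∧
      (∑' n : ℤ, if d ≤ n then r ^ n else 0) = r ^ d * (1 - r)⁻¹ := by
  set f : ℤ → ℝ := fun n => if d ≤ n then r ^ n else 0 with hfdef
  have hinj : Function.Injective (fun k : ℕ => d + (k : ℤ)) := by
    intro a b h
    simpa using h
  have hzero : ∀ x ∉ Set.range (fun k : ℕ => d + (k : ℤ)), f x = 0 := by
    intro x hx
    rw [hfdef]
    by_cases h : d ≤ x
    · exact absurd ⟨(x - d).toNat, show d + (((x - d).toNat : ℤ)) = x by omega⟩ hx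
    · simp [h]
  have hcomp : (f ∘ fun k : ℕ => d + (k : ℤ)) = fun k : ℕ => r ^ d * r ^ k := by
    funext k
    simp only [Function.comp_apply, hfdef]
    rw [if_pos (by omega), zpow_add₀ hr0.ne', zpow_natCast]
  have hs : Summable (fun k : ℕ => r ^ d * r ^ k) :=
    (summable_geometric_of_lt_one hr0.le hr1).mul_left _
  have hsf : Summable f := by
    rw [← Function.Injective.summable_iff hinj hzero, hcomp]
    exact hs
  refine ⟨hsf, ?_⟩
  have hsupp : Function.support f ⊆ Set.range (fun k : ℕ => d + (k : ℤ)) := by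
    intro x hx
    by_contra h
    exact hx (hzero x h)
  have ht := Function.Injective.tsum_eq hinj hsupp
  rw [← ht]
  calc ∑' k : ℕ, f (d + (k : ℤ)) = ∑' k : ℕ, r ^ d * r ^ k :=
        tsum_congr fun k => congrFun hcomp k
    _ = r ^ d * (1 - r)⁻¹ := by rw [tsum_mul_left, tsum_geometric_of_lt_one hr0.le hr1]

/-! ### The fundamental upper bound -/

section Main

variable {r : ℝ} {N : LaurentSeries ℂ → ℝ}

lemma N_le_pre (hr0 : 0 < r) (hr1 : r < 1) (hN : IsMultSeminormOn (Ar r) N)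
    (hbd : ∀ f ∈ Ar r, N f ≤ hybnorm r f)
    (htriv : ∀ c : ℂ, c ≠ 0 → N (HahnSeries.C c) = 1)
    {f : LaurentSeries ℂ} (hf : f ∈ Ar r) (hf0 : f ≠ 0) :
    N f ≤ r ^ f.order * (1 - r)⁻¹ := by
  obtain ⟨hN0, hN1, hNnn, hNmul, hNadd⟩ := hN
  have hfs : Summable (fun n : ℤ => hybNorm (f.coeff n) * r ^ n) := hf
  have hs1 : Summable (fun n : ℤ => if f.coeff n = 0 then (0:ℝ) else r ^ n) := by
    refine Summable.of_nonneg_of_le ?_ ?_ hfs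
    · intro n
      by_cases h : f.coeff n = 0 <;> simp [h, (zpow_pos hr0 n).le]
    · intro n
      by_cases h : f.coeff n = 0
      · simp [h, hybNorm_zero]
      · rw [if_neg h]
        nlinarith [one_le_hybNorm h, zpow_pos hr0 n]
  have hs3 : Summable (fun n : ℤ => ‖f.coeff n‖ * r ^ n) :=
    Summable.of_nonneg_of_le
      (fun n => mul_nonneg (norm_nonneg _) (zpow_pos hr0 n).le)
      (fun n => mul_le_mul_of_nonneg_right (abs_le_hybNorm _) (zpow_pos hr0 n).le) hfs
  set S := ∑' n : ℤ, (if f.coeff n = 0 then (0:ℝ) else r ^ n) with hSdef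
  set M := ∑' n : ℤ, ‖f.coeff n‖ * r ^ n with hMdef
  have hM0 : 0 ≤ M :=
    tsum_nonneg fun n => mul_nonneg (norm_nonneg _) (zpow_pos hr0 n).le
  have main : ∀ ε : ℝ, 0 < ε → N f ≤ S + ε * M := by
    intro ε hε
    have hne : (ε : ℂ) ≠ 0 := by
      simp only [ne_eq, Complex.ofReal_eq_zero]
      exact hε.ne'
    have hCmem : (HahnSeries.C (ε : ℂ) : LaurentSeries ℂ) ∈ Ar r := Ar_C r _
    have h1 : N (HahnSeries.C (ε : ℂ) * f) = N f := by
      rw [hNmul _ hCmem _ hf, htriv _ hne, one_mul]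
    have hmul : HahnSeries.C (ε : ℂ) * f ∈ Ar r := Ar_mul hr0 hCmem hf
    have hcoeff : ∀ n : ℤ, (HahnSeries.C (ε : ℂ) * f).coeff n = (ε : ℂ) * f.coeff n := by
      intro n
      rw [HahnSeries.C_apply, HahnSeries.coeff_single_zero_mul]
    have hterms : ∀ n : ℤ, hybNorm ((HahnSeries.C (ε : ℂ) * f).coeff n) * r ^ n ≤
        (if f.coeff n = 0 then (0:ℝ) else r ^ n) + ε * (‖f.coeff n‖ * r ^ n) := by
      intro n
      rw [hcoeff n]
      by_cases h : f.coeff n = 0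
      · simp [h, hybNorm_zero]
      · rw [if_neg h]
        have hkey : hybNorm ((ε : ℂ) * f.coeff n) ≤ 1 + ε * ‖f.coeff n‖ := by
          rw [hybNorm, if_neg (mul_ne_zero hne h)]
          apply max_le
          · nlinarith [norm_nonneg (f.coeff n)]
          · rw [norm_mul, Complex.norm_real, Real.norm_of_nonneg hε.le]
            linarith
        calc hybNorm ((ε : ℂ) * f.coeff n) * r ^ n
            ≤ (1 + ε * ‖f.coeff n‖) * r ^ n :=
              mul_le_mul_of_nonneg_right hkey (zpow_pos hr0 n).le
          _ = r ^ n + ε * (‖f.coeff n‖ * r ^ n) := by ring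
    calc N f = N (HahnSeries.C (ε : ℂ) * f) := h1.symm
      _ ≤ hybnorm r (HahnSeries.C (ε : ℂ) * f) := hbd _ hmul
      _ ≤ ∑' n : ℤ, ((if f.coeff n = 0 then (0:ℝ) else r ^ n) +
            ε * (‖f.coeff n‖ * r ^ n)) :=
          Summable.tsum_le_tsum hterms hmul (hs1.add (hs3.mul_left ε))
      _ = S + ε * M := by
          rw [Summable.tsum_add hs1 (hs3.mul_left ε), tsum_mul_left]
  have hNS : N f ≤ S := by
    by_contra hcon
    push_neg at hcon
    have hεgood := main ((N f - S) / (2 * (M + 1)))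
      (div_pos (by linarith) (by linarith))
    have hfrac : (N f - S) / (2 * (M + 1)) * M < N f - S := by
      rw [div_mul_eq_mul_div, div_lt_iff₀ (by linarith)]
      nlinarith
    linarith
  obtain ⟨hsumT, htsumT⟩ := geom_shift r hr0 hr1 f.order
  have hST : S ≤ r ^ f.order * (1 - r)⁻¹ := by
    rw [← htsumT, hSdef]
    apply Summable.tsum_le_tsum _ hs1 hsumT
    intro n
    by_cases h : f.coeff n = 0
    · rw [if_pos h]
      by_cases h2 : f.order ≤ n
      · rw [if_pos h2]; exact (zpow_pos hr0 n).le
      · rw [if_neg h2]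
    · rw [if_neg h, if_pos ?_]
      by_contra h2
      push_neg at h2
      exact h (HahnSeries.coeff_eq_zero_of_lt_order h2)
  linarith

lemma N_pow (hN : IsMultSeminormOn (Ar r) N) (hr0 : 0 < r)
    {f : LaurentSeries ℂ} (hf : f ∈ Ar r) (k : ℕ) : N (f ^ k) = N f ^ k := by
  induction k with
  | zero => simpa using hN.2.1
  | succ m ih =>
    rw [pow_succ, pow_succ, hN.2.2.2.1 _ (Ar_pow hr0 hf m) _ hf, ih]

lemma N_le_ord (hr0 : 0 < r) (hr1 : r < 1) (hN : IsMultSeminormOn (Ar r) N)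
    (hbd : ∀ f ∈ Ar r, N f ≤ hybnorm r f)
    (htriv : ∀ c : ℂ, c ≠ 0 → N (HahnSeries.C c) = 1)
    {f : LaurentSeries ℂ} (hf : f ∈ Ar r) (hf0 : f ≠ 0) :
    N f ≤ r ^ f.order := by
  by_contra hlt
  push_neg at hlt
  have hb : (0:ℝ) < r ^ f.order := zpow_pos hr0 _
  have h1 : 1 < N f / r ^ f.order := (one_lt_div hb).mpr hlt
  obtain ⟨k, hk⟩ := pow_unbounded_of_one_lt ((1 - r)⁻¹) h1
  have hfk : f ^ k ∈ Ar r := Ar_pow hr0 hf k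
  have hfk0 : f ^ k ≠ 0 := pow_ne_zero _ hf0
  have hup := N_le_pre hr0 hr1 hN hbd htriv hfk hfk0
  rw [N_pow hN hr0 hf k, HahnSeries.order_pow] at hup
  have hzp : r ^ (k • f.order) = (r ^ f.order) ^ k := by
    rw [nsmul_eq_mul, mul_comm, zpow_mul, zpow_natCast]
  rw [hzp] at hup
  rw [div_pow] at hk
  have hpk : (0:ℝ) < (r ^ f.order) ^ k := pow_pos hb k
  have hcontr : (1 - r)⁻¹ * (r ^ f.order) ^ k < N f ^ k := by
    rw [← lt_div_iff₀ hpk]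
    exact hk
  nlinarith

lemma N_le_r (hr0 : 0 < r) (hr1 : r < 1) (hN : IsMultSeminormOn (Ar r) N)
    (hbd : ∀ f ∈ Ar r, N f ≤ hybnorm r f)
    (htriv : ∀ c : ℂ, c ≠ 0 → N (HahnSeries.C c) = 1)
    {u : LaurentSeries ℂ} (hu : u ∈ Ar r) (h : u = 0 ∨ 1 ≤ u.order) : N u ≤ r := by
  rcases h with rfl | hord
  · rw [hN.1]; exact hr0.le
  have hu0 : u ≠ 0 := by
    intro h0
    rw [h0, HahnSeries.order_zero] at hord
    omega
  calc N u ≤ r ^ u.order := N_le_ord hr0 hr1 hN hbd htriv hu hu0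
    _ ≤ r ^ (1:ℤ) := zpow_le_zpow_right_of_le_one₀ hr0 hr1.le hord
    _ = r := zpow_one r

lemma order_ge_one_of (w : LaurentSeries ℂ) (hw : w ≠ 0) (h : ∀ n ≤ 0, w.coeff n = 0) :
    1 ≤ w.order := by
  by_contra hlt
  push_neg at hlt
  exact (HahnSeries.coeff_order_eq_zero.not.mpr hw) (h _ (by omega))

lemma N_eq_one_of_order_zero (hr0 : 0 < r) (hr1 : r < 1) (hN : IsMultSeminormOn (Ar r) N)
    (hbd : ∀ f ∈ Ar r, N f ≤ hybnorm r f)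
    (htriv : ∀ c : ℂ, c ≠ 0 → N (HahnSeries.C c) = 1)
    {g : LaurentSeries ℂ} (hg : g ∈ Ar r) (hg0 : g ≠ 0) (hgo : g.order = 0) : N g = 1 := by
  obtain ⟨hN0, hN1, hNnn, hNmul, hNadd⟩ := hN
  have ha : g.coeff 0 ≠ 0 := by
    have := HahnSeries.coeff_order_eq_zero.not.mpr hg0
    rwa [hgo] at this
  set a := g.coeff 0 with hadef
  have hainv : a⁻¹ ≠ 0 := inv_ne_zero ha
  set h := (HahnSeries.C a⁻¹ : LaurentSeries ℂ) * g with hhdef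
  have hhmem : h ∈ Ar r := Ar_mul hr0 (Ar_C r _) hg
  have hNh : N h = N g := by
    rw [hhdef, hNmul _ (Ar_C r _) _ hg, htriv _ hainv, one_mul]
  have hc0 : h.coeff 0 = 1 := by
    rw [hhdef, HahnSeries.C_apply, HahnSeries.coeff_single_zero_mul, ← hadef,
      inv_mul_cancel₀ ha]
  have hh0 : h ≠ 0 := by
    intro h0
    rw [h0, HahnSeries.coeff_zero] at hc0
    exact one_ne_zero hc0.symm
  have hCne : (HahnSeries.C a⁻¹ : LaurentSeries ℂ) ≠ 0 := by
    rw [HahnSeries.C_apply]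
    exact HahnSeries.single_ne_zero hainv
  have hho : h.order = 0 := by
    rw [hhdef, HahnSeries.order_mul hCne hg0, hgo, HahnSeries.C_apply,
      HahnSeries.order_single hainv, add_zero]
  have hpowc : ∀ m : ℕ, (h ^ m).coeff 0 = 1 := by
    intro m
    induction m with
    | zero => simp
    | succ j ih =>
      have hmc := HahnSeries.coeff_mul_order_add_order (h ^ j) h
      rw [HahnSeries.leadingCoeff_eq, HahnSeries.leadingCoeff_eq, HahnSeries.order_pow,
        hho, smul_zero, zero_add, ih, hc0, one_mul] at hmc
      rw [pow_succ]
      exact hmc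
  have key : ∀ m : ℕ, 1 - r ≤ N h ^ m := by
    intro m
    set v := h ^ m - 1 with hvdef
    have hvmem : v ∈ Ar r := Ar_sub hr0 (Ar_pow hr0 hhmem m) (Ar_one r)
    have hNv : N v ≤ r := by
      apply N_le_r hr0 hr1 ⟨hN0, hN1, hNnn, hNmul, hNadd⟩ hbd htriv hvmem
      rcases eq_or_ne v 0 with h0 | h0
      · exact Or.inl h0
      right
      apply order_ge_one_of v h0
      intro n hn
      rw [hvdef, HahnSeries.coeff_sub]
      rcases eq_or_lt_of_le hn with rfl | hlt
      · rw [hpowc m, HahnSeries.coeff_one, if_pos rfl, sub_self]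
      · have hord : (h ^ m).order = 0 := by rw [HahnSeries.order_pow, hho, smul_zero]
        rw [HahnSeries.coeff_eq_zero_of_lt_order (by rw [hord]; exact hlt),
          HahnSeries.coeff_one, if_neg (by omega), sub_self]
    have heq : h ^ m + -v = 1 := by rw [hvdef]; ring
    have hNneg : N (-v) = N v := by
      have hveq : -v = (HahnSeries.C (-1 : ℂ) : LaurentSeries ℂ) * v := by
        rw [map_neg, map_one, neg_one_mul]
      rw [hveq, hNmul _ (Ar_C r _) _ hvmem, htriv _ (by norm_num), one_mul]
    have h1 : (1:ℝ) ≤ N (h ^ m) + N (-v) := by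
      rw [← hN1, ← heq]
      exact hNadd _ (Ar_pow hr0 hhmem m) _ (Ar_neg hvmem)
    rw [N_pow ⟨hN0, hN1, hNnn, hNmul, hNadd⟩ hr0 hhmem m, hNneg] at h1
    linarith
  have hub : N h ≤ 1 := by
    have := N_le_ord hr0 hr1 ⟨hN0, hN1, hNnn, hNmul, hNadd⟩ hbd htriv hhmem hh0
    rwa [hho, zpow_zero] at this
  have hlb : 1 ≤ N h := by
    by_contra hlt
    push_neg at hlt
    obtain ⟨m, hm⟩ := exists_pow_lt_of_lt_one (show (0:ℝ) < 1 - r by linarith) hlt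
    linarith [key m]
  rw [← hNh]
  linarith

lemma N_single_one (hr0 : 0 < r) (hr1 : r < 1) (hN : IsMultSeminormOn (Ar r) N)
    (hbd : ∀ f ∈ Ar r, N f ≤ hybnorm r f)
    (htriv : ∀ c : ℂ, c ≠ 0 → N (HahnSeries.C c) = 1)
    (d : ℤ) : N (HahnSeries.single d (1:ℂ)) = r ^ d := by
  obtain ⟨hN0, hN1, hNnn, hNmul, hNadd⟩ := hN
  have hsne : ∀ e : ℤ, (HahnSeries.single e (1:ℂ) : LaurentSeries ℂ) ≠ 0 :=
    fun e => HahnSeries.single_ne_zero one_ne_zero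
  have hprod : (HahnSeries.single d (1:ℂ) : LaurentSeries ℂ) * HahnSeries.single (-d) 1 = 1 := by
    rw [HahnSeries.single_mul_single, add_neg_cancel, mul_one, HahnSeries.single_zero_one]
  have hp : N (HahnSeries.single d (1:ℂ)) * N (HahnSeries.single (-d) (1:ℂ)) = 1 := by
    rw [← hNmul _ (Ar_single r d 1) _ (Ar_single r (-d) 1), hprod, hN1]
  have hu1 : N (HahnSeries.single d (1:ℂ)) ≤ r ^ d := by
    have := N_le_ord hr0 hr1 ⟨hN0, hN1, hNnn, hNmul, hNadd⟩ hbd htriv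
      (Ar_single r d 1) (hsne d)
    rwa [HahnSeries.order_single one_ne_zero] at this
  have hu2 : N (HahnSeries.single (-d) (1:ℂ)) ≤ r ^ (-d) := by
    have := N_le_ord hr0 hr1 ⟨hN0, hN1, hNnn, hNmul, hNadd⟩ hbd htriv
      (Ar_single r (-d) 1) (hsne (-d))
    rwa [HahnSeries.order_single one_ne_zero] at this
  have hNd0 : 0 ≤ N (HahnSeries.single d (1:ℂ)) := hNnn _ (Ar_single r d 1)
  have h2 : 1 ≤ N (HahnSeries.single d (1:ℂ)) * r ^ (-d) := by
    calc (1:ℝ) = N (HahnSeries.single d (1:ℂ)) * N (HahnSeries.single (-d) (1:ℂ)) := hp.symm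
      _ ≤ N (HahnSeries.single d (1:ℂ)) * r ^ (-d) :=
        mul_le_mul_of_nonneg_left hu2 hNd0
  have hrr : r ^ d * r ^ (-d) = 1 := by
    rw [← zpow_add₀ hr0.ne', add_neg_cancel, zpow_zero]
  have hdpos : (0:ℝ) < r ^ d := zpow_pos hr0 d
  have hdneg : (0:ℝ) < r ^ (-d) := zpow_pos hr0 (-d)
  nlinarith

end Main

/-! ### Main theorem -/

/-- A multiplicative seminorm on `A_r` bounded by `‖·‖_{hyb,r}` whose
restriction to the constants is the trivial norm equals `τ(0)`, i.e. `N f = r^{ord₀ f}`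
for every nonzero `f ∈ A_r`. -/
theorem seminorm_trivial_on_C_eq_tau_zero (r : ℝ) (hr0 : 0 < r) (hr1 : r < 1)
    (N : LaurentSeries ℂ → ℝ) (hN : IsMultSeminormOn (Ar r) N)
    (hbd : ∀ f ∈ Ar r, N f ≤ hybnorm r f)
    (htriv : ∀ c : ℂ, c ≠ 0 → N (HahnSeries.C c) = 1) :
    (∀ f ∈ Ar r, f ≠ 0 → N f = r ^ f.order) ∧ (∀ f ∈ Ar r, N f = tau r 0 f) := by
  have part1 : ∀ f ∈ Ar r, f ≠ 0 → N f = r ^ f.order := by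
    intro f hf hf0
    set d := f.order with hd
    set g := (HahnSeries.single (-d) (1:ℂ) : LaurentSeries ℂ) * f with hgdef
    have hgmem : g ∈ Ar r := Ar_mul hr0 (Ar_single r (-d) 1) hf
    have hfg : (HahnSeries.single d (1:ℂ) : LaurentSeries ℂ) * g = f := by
      rw [hgdef, ← mul_assoc, HahnSeries.single_mul_single, add_neg_cancel, mul_one,
        HahnSeries.single_zero_one, one_mul]
    have hg0 : g ≠ 0 := by
      intro h0
      apply hf0
      rw [← hfg, h0, mul_zero]
    have hgo : g.order = 0 := by
      rw [hgdef, HahnSeries.order_mul (HahnSeries.single_ne_zero one_ne_zero) hf0,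
        HahnSeries.order_single one_ne_zero, ← hd, neg_add_cancel]
    calc N f = N (HahnSeries.single d (1:ℂ) * g) := by rw [hfg]
      _ = N (HahnSeries.single d (1:ℂ)) * N g := hN.2.2.2.1 _ (Ar_single r d 1) _ hgmem
      _ = r ^ d * 1 := by
          rw [N_single_one hr0 hr1 hN hbd htriv d,
            N_eq_one_of_order_zero hr0 hr1 hN hbd htriv hgmem hg0 hgo]
      _ = r ^ d := mul_one _
  refine ⟨part1, ?_⟩
  intro f hf
  by_cases h : f = 0
  · rw [h, hN.1, tau, if_pos rfl, if_pos rfl]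
  · rw [tau, if_pos rfl, if_neg h]
    exact part1 f hf h
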